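/- Let (N,d) be a complete global Alexandrov NPC space, T:N→N nonexpansive, and p a point with bounded orbit. Let mₙ(p) be the unique minimizer of Fₙ(r) = (1/n)Σ_{i=0}^{n−1} d²(r, Tⁱp). Then d(T mₙ(p), mₙ(p)) → 0 as n → ∞. -/

import Mathlib

open Set

/-- A (constant-speed, unit-interval) geodesic from `p` to `q`. -/
def IsGeodesic {N : Type*} [MetricSpace N] (γ : ℝ → N) (p q : N) : Prop :=
  γ 0 = p ∧ γ 1 = q ∧
    ∀ s ∈ Icc (0:ℝ) 1, ∀ t ∈ Icc (0:ℝ) 1, dist (γ s) (γ t) = |s - t| * dist p q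

/-- A geodesic length space: any two points are joined by a geodesic. -/
def GeodesicSpace (N : Type*) [MetricSpace N] : Prop :=
  ∀ p q : N, ∃ γ : ℝ → N, IsGeodesic γ p q

/-- Global Alexandrov NPC (CAT(0)) space. -/
def NPCSpace (N : Type*) [MetricSpace N] : Prop :=
  GeodesicSpace N ∧
    ∀ (p q r : N) (γ : ℝ → N), IsGeodesic γ p r → ∀ t ∈ Icc (0:ℝ) 1,
      dist q (γ t) ^ 2 ≤
        (1 - t) * dist q p ^ 2 + t * dist q r ^ 2 - t * (1 - t) * dist p r ^ 2

/-- A subset is convex if any two of its points are joined by a geodesic lying in the set. -/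
def ConvexSubset {N : Type*} [MetricSpace N] (C : Set N) : Prop :=
  ∀ p ∈ C, ∀ q ∈ C, ∃ γ : ℝ → N, IsGeodesic γ p q ∧ ∀ t ∈ Icc (0:ℝ) 1, γ t ∈ C

/-- `C` is the convex hull of `S`: the smallest convex subset containing `S`. -/
def IsConvexHull {N : Type*} [MetricSpace N] (S C : Set N) : Prop :=
  ConvexSubset C ∧ S ⊆ C ∧ ∀ D : Set N, ConvexSubset D → S ⊆ D → C ⊆ D
/-- for a nonexpansive map with bounded orbit, the means `mₙ(p)` of the
iterates satisfy `d(T mₙ(p), mₙ(p)) → 0`. -/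
theorem dist_mean_image_tendsto_zero {N : Type*} [MetricSpace N] [CompleteSpace N]
    (hN : NPCSpace N) (T : N → N)
    (hT : ∀ x y : N, dist (T x) (T y) ≤ dist x y)
    (p : N) (hbdd : Bornology.IsBounded (Set.range fun i : ℕ => T^[i] p))
    (m : ℕ → N)
    (hm : ∀ n : ℕ, 0 < n → ∀ r : N,
      (1 / (n : ℝ)) * ∑ i ∈ Finset.range n, dist (m n) (T^[i] p) ^ 2 ≤
        (1 / (n : ℝ)) * ∑ i ∈ Finset.range n, dist r (T^[i] p) ^ 2) :
    Filter.Tendsto (fun n => dist (T (m n)) (m n)) Filter.atTop (nhds 0) := by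

  -- A uniform bound on the orbit distances
  obtain ⟨D, hDsub⟩ := hbdd.subset_closedBall p
  have hD : ∀ i : ℕ, dist p (T^[i] p) ≤ D := by
    intro i
    have : T^[i] p ∈ Metric.closedBall p D := hDsub ⟨i, rfl⟩
    rw [Metric.mem_closedBall] at this
    rwa [dist_comm]
  have hD0 : 0 ≤ D := le_trans dist_nonneg (hD 0)
  -- unnormalized minimality
  have hm' : ∀ n : ℕ, 0 < n → ∀ r : N,
      ∑ i ∈ Finset.range n, dist (m n) (T^[i] p) ^ 2 ≤
        ∑ i ∈ Finset.range n, dist r (T^[i] p) ^ 2 := by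
    intro n hn r
    have hpos : (0:ℝ) < 1 / n := by positivity
    exact (mul_le_mul_iff_right₀ hpos).mp (hm n hn r)
  -- bound on dist (m n) p
  have hmp : ∀ n : ℕ, 0 < n → dist (m n) p ≤ 2 * D := by
    intro n hn
    obtain ⟨i, hi, hle⟩ := Finset.exists_le_of_sum_le ⟨0, Finset.mem_range.mpr hn⟩ (hm' n hn p)
    have h1 : dist p (T^[i] p) ≤ D := hD i
    have h2 : dist (m n) (T^[i] p) ≤ D := by
      nlinarith [dist_nonneg (x := m n) (y := T^[i] p), dist_nonneg (x := p) (y := T^[i] p)]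
    calc dist (m n) p ≤ dist (m n) (T^[i] p) + dist (T^[i] p) p := dist_triangle _ _ _
      _ ≤ D + D := by rw [dist_comm (T^[i] p) p]; exact add_le_add h2 h1
      _ = 2 * D := by ring
  -- key quantitative estimate
  have hkey : ∀ n : ℕ, 0 < n → dist (T (m n)) (m n) ^ 2 ≤ 18 * D ^ 2 / n := by
    intro n hn
    set x := m n with hx
    set y := T (m n) with hy
    have hyp : dist y p ≤ 3 * D := by
      have h1 : dist y (T p) ≤ dist x p := hT x p
      have h2 : dist (T p) p ≤ D := by
        have := hD 1; rwa [Function.iterate_one, dist_comm] at this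
      calc dist y p ≤ dist y (T p) + dist (T p) p := dist_triangle _ _ _
        _ ≤ dist x p + D := add_le_add h1 h2
        _ ≤ 2 * D + D := by linarith [hmp n hn]
        _ = 3 * D := by ring
    -- shifted sum estimate
    have hTsum : ∑ i ∈ Finset.range n, dist y (T^[i] p) ^ 2 ≤
        ∑ i ∈ Finset.range n, dist x (T^[i] p) ^ 2 + 9 * D ^ 2 := by
      obtain ⟨k, rfl⟩ := Nat.exists_eq_succ_of_ne_zero hn.ne'
      rw [Finset.sum_range_succ' (fun i => dist y (T^[i] p) ^ 2),
        Finset.sum_range_succ (fun i => dist x (T^[i] p) ^ 2)]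
      have hterm : ∀ i ∈ Finset.range k,
          dist y (T^[i+1] p) ^ 2 ≤ dist x (T^[i] p) ^ 2 := by
        intro i _
        have : dist y (T^[i+1] p) ≤ dist x (T^[i] p) := by
          rw [Function.iterate_succ_apply']
          exact hT _ _
        exact pow_le_pow_left₀ dist_nonneg this 2
      have hsum := Finset.sum_le_sum hterm
      have h0 : dist y (T^[0] p) ^ 2 ≤ 9 * D ^ 2 := by
        simp only [Function.iterate_zero_apply]
        nlinarith [dist_nonneg (x := y) (y := p)]
      nlinarith [sq_nonneg (dist x (T^[k] p))]
    -- midpoint argument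
    obtain ⟨γ, hγ⟩ := hN.1 x y
    have hhalf : (1:ℝ)/2 ∈ Icc (0:ℝ) 1 := by constructor <;> norm_num
    have hnpc : ∀ i ∈ Finset.range n,
        dist (γ (1/2)) (T^[i] p) ^ 2 ≤
          (1/2) * dist x (T^[i] p) ^ 2 + (1/2) * dist y (T^[i] p) ^ 2
            - (1/4) * dist x y ^ 2 := by
      intro i _
      have h := hN.2 x (T^[i] p) y γ hγ (1/2) hhalf
      rw [dist_comm (γ (1/2)), dist_comm x (T^[i] p), dist_comm y (T^[i] p)]
      nlinarith [h]
    have hsum2 := Finset.sum_le_sum hnpc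
    have hsum3 : ∑ i ∈ Finset.range n,
        ((1/2) * dist x (T^[i] p) ^ 2 + (1/2) * dist y (T^[i] p) ^ 2
          - (1/4) * dist x y ^ 2)
        = (1/2) * ∑ i ∈ Finset.range n, dist x (T^[i] p) ^ 2
          + (1/2) * ∑ i ∈ Finset.range n, dist y (T^[i] p) ^ 2
          - n * ((1/4) * dist x y ^ 2) := by
      rw [Finset.sum_sub_distrib, Finset.sum_add_distrib, ← Finset.mul_sum, ← Finset.mul_sum,
        Finset.sum_const, Finset.card_range, nsmul_eq_mul]
    rw [hsum3] at hsum2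
    have hmin := hm' n hn (γ (1/2))
    rw [← hx] at hmin
    rw [dist_comm x y] at hsum2
    have hnpos : (0:ℝ) < n := by exact_mod_cast hn
    rw [le_div_iff₀ hnpos]
    nlinarith [hsum2, hmin, hTsum]
  -- conclude via squeeze
  have hlim0 : Filter.Tendsto (fun n : ℕ => 18 * D ^ 2 / n) Filter.atTop (nhds 0) :=
    tendsto_const_div_atTop_nhds_zero_nat _
  have hlim : Filter.Tendsto (fun n : ℕ => Real.sqrt (18 * D ^ 2 / n))
      Filter.atTop (nhds 0) := by
    simpa only [Function.comp_def, Real.sqrt_zero]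
      using (Real.continuous_sqrt.tendsto 0).comp hlim0
  apply squeeze_zero' (Filter.Eventually.of_forall fun n => dist_nonneg) _ hlim
  filter_upwards [Filter.eventually_gt_atTop 0] with n hn
  have h := hkey n hn
  calc dist (T (m n)) (m n) = Real.sqrt (dist (T (m n)) (m n) ^ 2) :=
        (Real.sqrt_sq dist_nonneg).symm
    _ ≤ Real.sqrt (18 * D ^ 2 / n) := Real.sqrt_le_sqrt h
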